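/- Let n ≥ 1 and 0 ≤ p ≤ n be integers, and let d : {1,…,n} → ℝ. Write D = ∑_i d_i and Q = ∑_i d_i². Then ∑_{|I|=p} (∑_j sgn_I(j) d_j)² = (C(n,p) − 4C(n−2,p−1))·D² + 4C(n−2,p−1)·Q. -/
import Mathlib

/-- Binomial coefficient with the convention `C a b = 0` if `b < 0` or `b > a`. -/
def C (a b : ℤ) : ℤ := if 0 ≤ b ∧ b ≤ a then (a.toNat.choose b.toNat : ℤ) else 0

/-- `sgn_I(j) = 1` if `j ∈ I` and `-1` otherwise. -/
def sgn {n : ℕ} (I : Finset (Fin n)) (j : Fin n) : ℝ := if j ∈ I then 1 else -1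

open Finset

theorem countJK (α : Type*) [DecidableEq α] (s : Finset α) (j k : α) (hj : j ∈ s) (hjk : j ≠ k) (q : ℕ) :
    ((s.powersetCard (q+1)).filter (fun I => j ∈ I ∧ k ∉ I)).card
      = (((s.erase j).erase k).powersetCard q).card := by
  apply Finset.card_bij' (fun I _ => I.erase j) (fun J _ => insert j J)
  case hi =>
    intro I hI
    simp only [mem_filter, mem_powersetCard] at hI ⊢
    obtain ⟨⟨hsub, hcard⟩, hjI, hkI⟩ := hI
    constructor
    · intro x hx
      simp only [mem_erase] at hx ⊢
      exact ⟨fun h => hkI (h ▸ hx.2), hx.1, hsub hx.2⟩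
    · rw [card_erase_of_mem hjI, hcard]; omega
  case hj =>
    intro J hJ
    simp only [mem_powersetCard] at hJ
    obtain ⟨hsub, hcard⟩ := hJ
    have hjJ : j ∉ J := fun h => by
      have := hsub h; simp [mem_erase] at this
    simp only [mem_filter, mem_powersetCard]
    refine ⟨⟨?_, ?_⟩, mem_insert_self _ _, ?_⟩
    · intro x hx
      rcases mem_insert.1 hx with rfl | hx
      · exact hj
      · have := hsub hx; simp only [mem_erase] at this; exact this.2.2
    · rw [card_insert_of_notMem hjJ, hcard]
    · simp only [mem_insert, not_or]
      exact ⟨fun h => hjk h.symm, fun h => by have := hsub h; simp [mem_erase] at this⟩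
  case left_inv =>
    intro I hI
    simp only [mem_filter] at hI
    exact insert_erase hI.2.1
  case right_inv =>
    intro J hJ
    simp only [mem_powersetCard] at hJ
    apply erase_insert
    intro h; have := hJ.1 h; simp [mem_erase] at this

lemma C_nat (n p : ℕ) (hp : p ≤ n) : C (n : ℤ) (p : ℤ) = (n.choose p : ℤ) := by
  unfold C
  rw [if_pos ⟨Int.ofNat_nonneg p, by exact_mod_cast hp⟩]
  simp

lemma C_sub (n p : ℕ) (hp : 1 ≤ p) (hn : 2 ≤ n) :
    C ((n : ℤ) - 2) ((p : ℤ) - 1) = ((n - 2).choose (p - 1) : ℤ) := by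
  unfold C
  split_ifs with h
  · have h1 : ((n : ℤ) - 2).toNat = n - 2 := by omega
    have h2 : ((p : ℤ) - 1).toNat = p - 1 := by omega
    rw [h1, h2]
  · push_neg at h
    have : (n : ℤ) - 2 < (p : ℤ) - 1 := h (by omega)
    have hlt : n - 2 < p - 1 := by omega
    rw [Nat.choose_eq_zero_of_lt hlt]; simp

lemma C_neg (n : ℕ) : C ((n : ℤ) - 2) ((0 : ℕ) - 1 : ℤ) = 0 := by
  unfold C; rw [if_neg]; push_neg; intro h; omega

lemma offdiag (n p : ℕ) (j k : Fin n) (hjk : j ≠ k) :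
    ∑ I ∈ Finset.powersetCard p (Finset.univ : Finset (Fin n)), sgn I j * sgn I k
      = (n.choose p : ℝ) - 4 * (C ((n : ℤ) - 2) ((p : ℤ) - 1) : ℝ) := by
  have hn2 : 2 ≤ n := by
    have := Fintype.card_fin n ▸ Fintype.one_lt_card_iff_nontrivial (α := Fin n)
    exact this.2 ⟨j, k, hjk⟩
  have hsgn : ∀ I : Finset (Fin n), sgn I j * sgn I k
      = 1 - 2 * (if ¬(j ∈ I ↔ k ∈ I) then (1:ℝ) else 0) := by
    intro I
    unfold sgn
    by_cases h1 : j ∈ I <;> by_cases h2 : k ∈ I <;> simp [h1, h2] <;> norm_num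
  rw [Finset.sum_congr rfl fun I _ => hsgn I, Finset.sum_sub_distrib, Finset.sum_const,
    ← Finset.mul_sum, Finset.sum_boole, Finset.card_powersetCard, Finset.card_univ,
    Fintype.card_fin]
  have hfe : (Finset.powersetCard p (Finset.univ : Finset (Fin n))).filter
        (fun I => ¬(j ∈ I ↔ k ∈ I))
      = (Finset.powersetCard p (Finset.univ : Finset (Fin n))).filter
        (fun I => j ∈ I ∧ k ∉ I) ∪
        (Finset.powersetCard p (Finset.univ : Finset (Fin n))).filter
        (fun I => k ∈ I ∧ j ∉ I) := by
    rw [← Finset.filter_or]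
    apply Finset.filter_congr
    intro I _
    constructor
    · intro h
      by_cases h1 : j ∈ I <;> by_cases h2 : k ∈ I <;> tauto
    · intro h; tauto
  have hdisj : Disjoint
      ((Finset.powersetCard p (Finset.univ : Finset (Fin n))).filter (fun I => j ∈ I ∧ k ∉ I))
      ((Finset.powersetCard p (Finset.univ : Finset (Fin n))).filter (fun I => k ∈ I ∧ j ∉ I)) := by
    apply Finset.disjoint_filter_filter'
    rw [disjoint_iff_inf_le]
    intro I hI
    simp only [Pi.inf_apply, inf_Prop_eq] at hI
    exact absurd hI.1.1 hI.2.2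
  rw [hfe, Finset.card_union_of_disjoint hdisj]
  rcases Nat.eq_zero_or_pos p with rfl | hp
  · have h1 : ∀ (a b : Fin n), (Finset.powersetCard 0 (Finset.univ : Finset (Fin n))).filter
        (fun I => a ∈ I ∧ b ∉ I) = ∅ := by
      intro a b
      rw [Finset.powersetCard_zero]
      simp [Finset.filter_eq_empty_iff]
    rw [h1, h1, C_neg]
    simp
  · obtain ⟨q, rfl⟩ : ∃ q, p = q + 1 := ⟨p - 1, by omega⟩
    have e1 := countJK (Fin n) Finset.univ j k (Finset.mem_univ j) hjk q
    have e2 := countJK (Fin n) Finset.univ k j (Finset.mem_univ k) hjk.symm q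
    have hc1 : (((Finset.univ : Finset (Fin n)).erase j).erase k).card = n - 2 := by
      rw [Finset.card_erase_of_mem (Finset.mem_erase.2 ⟨hjk.symm, Finset.mem_univ k⟩),
        Finset.card_erase_of_mem (Finset.mem_univ j), Finset.card_univ, Fintype.card_fin]
      omega
    have hc2 : (((Finset.univ : Finset (Fin n)).erase k).erase j).card = n - 2 := by
      rw [Finset.card_erase_of_mem (Finset.mem_erase.2 ⟨hjk, Finset.mem_univ j⟩),
        Finset.card_erase_of_mem (Finset.mem_univ k), Finset.card_univ, Fintype.card_fin]
      omega
    rw [e1, e2, Finset.card_powersetCard, Finset.card_powersetCard, hc1, hc2,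
      C_sub n (q+1) (by omega) hn2]
    simp only [nsmul_eq_mul, mul_one]
    push_cast
    ring

theorem stmt15 (n p : ℕ) (hn : 1 ≤ n) (hp : p ≤ n) (d : Fin n → ℝ) :
    ∑ I ∈ Finset.powersetCard p (Finset.univ : Finset (Fin n)),
        (∑ j, sgn I j * d j) ^ 2 =
      ((C (n : ℤ) (p : ℤ) : ℝ) - 4 * (C ((n : ℤ) - 2) ((p : ℤ) - 1) : ℝ)) * (∑ i, d i) ^ 2 +
        4 * (C ((n : ℤ) - 2) ((p : ℤ) - 1) : ℝ) * (∑ i, d i ^ 2) := by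
  set P := Finset.powersetCard p (Finset.univ : Finset (Fin n)) with hP
  set a : ℝ := (n.choose p : ℝ) with ha
  set b : ℝ := (C ((n : ℤ) - 2) ((p : ℤ) - 1) : ℝ) with hb
  have hCnp : (C (n : ℤ) (p : ℤ) : ℝ) = a := by rw [C_nat n p hp]; push_cast; rfl
  have key : ∀ j k : Fin n, (∑ I ∈ P, sgn I j * sgn I k)
      = (a - 4 * b) + (if j = k then 4 * b else 0) := by
    intro j k
    by_cases hjk : j = k
    · subst hjk
      rw [if_pos rfl]
      have : ∀ I : Finset (Fin n), sgn I j * sgn I j = 1 := by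
        intro I; unfold sgn; by_cases h : j ∈ I <;> simp [h]
      rw [Finset.sum_congr rfl fun I _ => this I, Finset.sum_const, hP,
        Finset.card_powersetCard, Finset.card_univ, Fintype.card_fin]
      simp [ha]
    · rw [if_neg hjk, offdiag n p j k hjk]
      ring
  calc ∑ I ∈ P, (∑ j, sgn I j * d j) ^ 2
      = ∑ I ∈ P, ∑ j, ∑ k, (sgn I j * sgn I k) * (d j * d k) := by
        apply Finset.sum_congr rfl
        intro I _
        rw [sq, Finset.sum_mul_sum]
        apply Finset.sum_congr rfl; intro j _
        apply Finset.sum_congr rfl; intro k _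
        ring
    _ = ∑ j, ∑ k, (∑ I ∈ P, sgn I j * sgn I k) * (d j * d k) := by
        rw [Finset.sum_comm]
        apply Finset.sum_congr rfl; intro j _
        rw [Finset.sum_comm]
        apply Finset.sum_congr rfl; intro k _
        rw [Finset.sum_mul]
    _ = ∑ j, ∑ k, ((a - 4*b) * (d j * d k) + (if j = k then 4*b*(d j * d k) else 0)) := by
        apply Finset.sum_congr rfl; intro j _
        apply Finset.sum_congr rfl; intro k _
        rw [key j k]
        by_cases h : j = k <;> simp [h] <;> ring
    _ = (a - 4*b) * (∑ i, d i)^2 + 4*b * (∑ i, d i ^ 2) := by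
        rw [Finset.sum_congr rfl fun j _ => Finset.sum_add_distrib, Finset.sum_add_distrib]
        congr 1
        · rw [sq, Finset.sum_mul_sum, Finset.mul_sum]
          apply Finset.sum_congr rfl; intro j _
          rw [Finset.mul_sum]
        · have : ∀ j : Fin n, (∑ k, if j = k then 4*b*(d j * d k) else 0) = 4*b*(d j)^2 := by
            intro j
            rw [Finset.sum_ite_eq]
            simp [sq]
          rw [Finset.sum_congr rfl fun j _ => this j, Finset.mul_sum]
    _ = ((C (n : ℤ) (p : ℤ) : ℝ) - 4 * b) * (∑ i, d i) ^ 2 + 4 * b * (∑ i, d i ^ 2) := by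
        rw [hCnp]
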